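/- Let e₁, …, eₙ (n ≥ 2) be a basis of ℝⁿ with Gram parameters ⟨eᵢ,eⱼ⟩, and consider the cross-polytope βₙ with vertices 0, eᵢ (1 ≤ i ≤ n-1), eₙ, and eₙ - eᵢ (1 ≤ i ≤ n-1), inscribed in a sphere of center c with 0 on the sphere. Then the circumscribing conditions 2⟨c, v⟩ = ‖v‖² for all vertices v are equivalent, beyond determining c, to exactly the n-1 independent linear relations ⟨eᵢ, eₙ⟩ = ‖eᵢ‖² for 1 ≤ i ≤ n-1 on the Gram matrix. Consequently rk(βₙ) = n(n+1)/2 - (n-1). -/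

import Mathlib

open Matrix
/-- The space of symmetric Gram matrices satisfying the `n` cross-polytope relations
`⟨eᵢ, e_last⟩ = ‖eᵢ‖²` for `i ≠ last`. -/
def crossRelSpace (n : ℕ) : Submodule ℝ (Matrix (Fin (n + 1)) (Fin (n + 1)) ℝ) where
  carrier := {G | G.IsSymm ∧ ∀ i : Fin (n + 1), i ≠ Fin.last n → G i (Fin.last n) = G i i}
  add_mem' := by
    rintro A B ⟨hA, hA'⟩ ⟨hB, hB'⟩
    exact ⟨hA.add hB, fun i hi => by simp [Matrix.add_apply, hA' i hi, hB' i hi]⟩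
  zero_mem' := ⟨by simp [Matrix.IsSymm], fun i _ => by simp⟩
  smul_mem' := by
    rintro t A ⟨hA, hA'⟩
    exact ⟨hA.smul t, fun i hi => by simp [Matrix.smul_apply, hA' i hi]⟩

abbrev QIdx (n : ℕ) := (Σ i : Fin n, Fin (i.1 + 1)) ⊕ Unit

def crossPhi (n : ℕ) : crossRelSpace n →ₗ[ℝ] (QIdx n → ℝ) where
  toFun G := fun q =>
    match q with
    | .inl ⟨i, j⟩ => G.1 (Fin.castLE (Nat.succ_le_succ (le_of_lt i.2)) j) i.castSucc
    | .inr _ => G.1 (Fin.last n) (Fin.last n)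
  map_add' A B := by funext q; rcases q with ⟨i, j⟩ | u <;> rfl
  map_smul' t A := by funext q; rcases q with ⟨i, j⟩ | u <;> rfl

lemma crossPhi_inj (n : ℕ) : Function.Injective (crossPhi n) := by
  rw [injective_iff_map_eq_zero]
  intro G hG0
  have gsym : (G.1)ᵀ = G.1 := G.2.1
  have key : ∀ a b : Fin (n+1), a ≤ b → b ≠ Fin.last n → G.1 a b = 0 := by
    intro a b hab hbl
    have hb : b.1 < n := by
      have h1 := b.2
      have h2 : b.1 ≠ n := fun h => hbl (Fin.ext h)
      omega
    have h := congrFun hG0 (Sum.inl ⟨⟨b.1, hb⟩, ⟨a.1, Nat.lt_succ_of_le hab⟩⟩)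
    have e1 : (Fin.castLE (Nat.succ_le_succ (le_of_lt (⟨b.1, hb⟩ : Fin n).2))
        (⟨a.1, Nat.lt_succ_of_le hab⟩ : Fin (b.1+1))) = a := Fin.ext rfl
    have e2 : (⟨b.1, hb⟩ : Fin n).castSucc = b := Fin.ext rfl
    simpa [crossPhi, e1, e2] using h
  have key2 : ∀ a b : Fin (n+1), a ≤ b → G.1 a b = 0 := by
    intro a b hab
    by_cases hbl : b = Fin.last n
    · by_cases hal : a = Fin.last n
      · subst hbl; subst hal
        simpa [crossPhi] using congrFun hG0 (Sum.inr ())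
      · have := G.2.2 a hal
        rw [hbl, this]
        exact key a a le_rfl hal
    · exact key a b hab hbl
  apply Subtype.ext
  ext a b
  rcases le_total a b with hab | hba
  · exact key2 a b hab
  · rw [← gsym, Matrix.transpose_apply]; exact key2 b a hba

lemma crossPhi_surj (n : ℕ) : Function.Surjective (crossPhi n) := by
  rw [← LinearMap.range_eq_top, ← top_le_iff, ← (Pi.basisFun ℝ (QIdx n)).span_eq,
    Submodule.span_le]
  rintro _ ⟨q, rfl⟩
  rw [Pi.basisFun_apply]
  have stdapp : ∀ (a b x y : Fin (n+1)), Matrix.single a b (1:ℝ) x y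
      = if a = x ∧ b = y then 1 else 0 := fun a b x y => rfl
  rcases q with ⟨i, j⟩ | u
  · have hi := i.2
    have hj := Nat.lt_succ_iff.mp j.2
    by_cases hd : (j.1 : ℕ) = i.1
    · -- diagonal case
      refine ⟨⟨Matrix.single (Fin.castLE (Nat.succ_le_succ (le_of_lt i.2)) j)
            (Fin.castLE (Nat.succ_le_succ (le_of_lt i.2)) j) 1
          + Matrix.single (Fin.castLE (Nat.succ_le_succ (le_of_lt i.2)) j) (Fin.last n) 1
          + Matrix.single (Fin.last n) (Fin.castLE (Nat.succ_le_succ (le_of_lt i.2)) j) 1,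
          ?_, ?_⟩, ?_⟩
      · ext x y
        simp only [Matrix.transpose_apply, Matrix.add_apply, stdapp]
        split_ifs <;> try norm_num
        all_goals (exfalso; simp only [Fin.ext_iff, Fin.val_last, Fin.coe_castLE,
          not_and, and_true, true_and, not_true, imp_false] at *; omega)
      · intro k hk
        rw [Fin.ne_iff_vne, Fin.val_last] at hk
        simp only [Matrix.add_apply, stdapp]
        split_ifs <;> try norm_num
        all_goals (exfalso; simp only [Fin.ext_iff, Fin.val_last, Fin.coe_castLE,
          not_and, and_true, true_and, not_true, imp_false] at *; omega)
      · funext q'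
        rcases q' with ⟨i', j'⟩ | u'
        · have hi' := i'.2
          have hj' := Nat.lt_succ_iff.mp j'.2
          show (Matrix.single (Fin.castLE (Nat.succ_le_succ (le_of_lt i.2)) j)
              (Fin.castLE (Nat.succ_le_succ (le_of_lt i.2)) j) 1
            + Matrix.single (Fin.castLE (Nat.succ_le_succ (le_of_lt i.2)) j) (Fin.last n) 1
            + Matrix.single (Fin.last n) (Fin.castLE (Nat.succ_le_succ (le_of_lt i.2)) j) 1
            : Matrix (Fin (n+1)) (Fin (n+1)) ℝ)
            (Fin.castLE (Nat.succ_le_succ (le_of_lt i'.2)) j') i'.castSucc = _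
          by_cases hq : (⟨i', j'⟩ : Σ m : Fin n, Fin (m.1+1)) = ⟨i, j⟩
          · rw [hq, Pi.single_eq_same]
            obtain ⟨hii, hjj⟩ := Sigma.mk.inj_iff.mp hq
            have hiv : i'.1 = i.1 := by rw [hii]
            have hjv : j'.1 = j.1 := by
              subst hii; rw [heq_iff_eq] at hjj; rw [hjj]
            simp only [Matrix.add_apply, stdapp]
            split_ifs <;> try norm_num
            all_goals (exfalso; simp only [Fin.ext_iff, Fin.val_last, Fin.coe_castLE,
              Fin.coe_castSucc, not_and, and_true, true_and, not_true, imp_false] at *; omega)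
          · rw [Pi.single_eq_of_ne (fun h => hq (Sum.inl.inj h))]
            have hne : ¬ (j'.1 = j.1 ∧ i'.1 = i.1) := by
              rintro ⟨h1, h2⟩
              apply hq
              have : i' = i := Fin.ext h2
              subst this
              have : j' = j := Fin.ext h1
              subst this
              rfl
            simp only [Matrix.add_apply, stdapp]
            split_ifs <;> try norm_num
            all_goals (exfalso; simp only [Fin.ext_iff, Fin.val_last, Fin.coe_castLE,
              Fin.coe_castSucc, not_and, and_true, true_and, not_true, imp_false] at *; omega)
        · show (Matrix.single (Fin.castLE (Nat.succ_le_succ (le_of_lt i.2)) j)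
              (Fin.castLE (Nat.succ_le_succ (le_of_lt i.2)) j) 1
            + Matrix.single (Fin.castLE (Nat.succ_le_succ (le_of_lt i.2)) j) (Fin.last n) 1
            + Matrix.single (Fin.last n) (Fin.castLE (Nat.succ_le_succ (le_of_lt i.2)) j) 1
            : Matrix (Fin (n+1)) (Fin (n+1)) ℝ) (Fin.last n) (Fin.last n) = _
          rw [Pi.single_eq_of_ne (by simp)]
          simp only [Matrix.add_apply, stdapp]
          split_ifs <;> try norm_num
          all_goals (exfalso; simp only [Fin.ext_iff, Fin.val_last, Fin.coe_castLE,
            not_and, and_true, true_and, not_true, imp_false] at *; omega)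
    · -- off-diagonal case
      refine ⟨⟨Matrix.single (Fin.castLE (Nat.succ_le_succ (le_of_lt i.2)) j) i.castSucc 1
          + Matrix.single i.castSucc (Fin.castLE (Nat.succ_le_succ (le_of_lt i.2)) j) 1,
          ?_, ?_⟩, ?_⟩
      · ext x y
        simp only [Matrix.transpose_apply, Matrix.add_apply, stdapp]
        split_ifs <;> try norm_num
        all_goals (exfalso; simp only [Fin.ext_iff, Fin.val_last, Fin.coe_castLE,
          Fin.coe_castSucc, not_and, and_true, true_and, not_true, imp_false] at *; omega)
      · intro k hk
        rw [Fin.ne_iff_vne, Fin.val_last] at hk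
        simp only [Matrix.add_apply, stdapp]
        split_ifs <;> try norm_num
        all_goals (exfalso; simp only [Fin.ext_iff, Fin.val_last, Fin.coe_castLE,
          Fin.coe_castSucc, not_and, and_true, true_and, not_true, imp_false] at *; omega)
      · funext q'
        rcases q' with ⟨i', j'⟩ | u'
        · have hi' := i'.2
          have hj' := Nat.lt_succ_iff.mp j'.2
          show (Matrix.single (Fin.castLE (Nat.succ_le_succ (le_of_lt i.2)) j) i.castSucc 1
            + Matrix.single i.castSucc (Fin.castLE (Nat.succ_le_succ (le_of_lt i.2)) j) 1
            : Matrix (Fin (n+1)) (Fin (n+1)) ℝ)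
            (Fin.castLE (Nat.succ_le_succ (le_of_lt i'.2)) j') i'.castSucc = _
          by_cases hq : (⟨i', j'⟩ : Σ m : Fin n, Fin (m.1+1)) = ⟨i, j⟩
          · rw [hq, Pi.single_eq_same]
            obtain ⟨hii, hjj⟩ := Sigma.mk.inj_iff.mp hq
            have hiv : i'.1 = i.1 := by rw [hii]
            have hjv : j'.1 = j.1 := by
              subst hii; rw [heq_iff_eq] at hjj; rw [hjj]
            simp only [Matrix.add_apply, stdapp]
            split_ifs <;> try norm_num
            all_goals (exfalso; simp only [Fin.ext_iff, Fin.val_last, Fin.coe_castLE,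
              Fin.coe_castSucc, not_and, and_true, true_and, not_true, imp_false] at *; omega)
          · rw [Pi.single_eq_of_ne (fun h => hq (Sum.inl.inj h))]
            have hne : ¬ (j'.1 = j.1 ∧ i'.1 = i.1) := by
              rintro ⟨h1, h2⟩
              apply hq
              have : i' = i := Fin.ext h2
              subst this
              have : j' = j := Fin.ext h1
              subst this
              rfl
            simp only [Matrix.add_apply, stdapp]
            split_ifs <;> try norm_num
            all_goals (exfalso; simp only [Fin.ext_iff, Fin.val_last, Fin.coe_castLE,
              Fin.coe_castSucc, not_and, and_true, true_and, not_true, imp_false] at *; omega)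
        · show (Matrix.single (Fin.castLE (Nat.succ_le_succ (le_of_lt i.2)) j) i.castSucc 1
            + Matrix.single i.castSucc (Fin.castLE (Nat.succ_le_succ (le_of_lt i.2)) j) 1
            : Matrix (Fin (n+1)) (Fin (n+1)) ℝ) (Fin.last n) (Fin.last n) = _
          rw [Pi.single_eq_of_ne (by simp)]
          simp only [Matrix.add_apply, stdapp]
          split_ifs <;> try norm_num
          all_goals (exfalso; simp only [Fin.ext_iff, Fin.val_last, Fin.coe_castLE,
            Fin.coe_castSucc, not_and, and_true, true_and, not_true, imp_false] at *; omega)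
  · refine ⟨⟨Matrix.single (Fin.last n) (Fin.last n) 1, ?_, ?_⟩, ?_⟩
    · ext x y
      simp only [Matrix.transpose_apply, stdapp]
      split_ifs <;> try norm_num
      all_goals (exfalso; simp only [Fin.ext_iff, not_and, and_true, true_and, not_true, imp_false] at *; omega)
    · intro k hk
      rw [Fin.ne_iff_vne, Fin.val_last] at hk
      simp only [stdapp]
      split_ifs <;> try norm_num
      all_goals (exfalso; simp only [Fin.ext_iff, Fin.val_last, not_and, and_true, true_and, not_true, imp_false] at *; omega)
    · funext q'
      rcases q' with ⟨i', j'⟩ | u'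
      · have hi' := i'.2
        have hj' := Nat.lt_succ_iff.mp j'.2
        show (Matrix.single (Fin.last n) (Fin.last n) 1 : Matrix (Fin (n+1)) (Fin (n+1)) ℝ)
          (Fin.castLE (Nat.succ_le_succ (le_of_lt i'.2)) j') i'.castSucc = _
        rw [Pi.single_eq_of_ne (by simp)]
        simp only [stdapp]
        split_ifs <;> try norm_num
        all_goals (exfalso; simp only [Fin.ext_iff, Fin.val_last, Fin.coe_castLE,
          Fin.coe_castSucc, not_and, and_true, true_and, not_true, imp_false] at *; omega)
      · show (Matrix.single (Fin.last n) (Fin.last n) 1 : Matrix (Fin (n+1)) (Fin (n+1)) ℝ)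
          (Fin.last n) (Fin.last n) = _
        have hu : u' = u := rfl
        rw [hu, Pi.single_eq_same, stdapp]
        simp

lemma evensum_aux (n : ℕ) : 2*((n+1)*n/2) = (n+1)*n :=
  Nat.two_mul_div_two_of_even (by rw [Nat.mul_comm]; exact Nat.even_mul_succ_self n)

lemma sum_succ_aux (n : ℕ) : (∑ i ∈ Finset.range n, (i+1)) = (n+1)*n/2 := by
  induction n with
  | zero => simp
  | succ m ih =>
    rw [Finset.sum_range_succ, ih]
    have h1 := evensum_aux m
    have h2 := evensum_aux (m+1)
    have h3 : (m+1+1)*(m+1) = (m+1)*m + 2*(m+1) := by ring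
    omega

lemma crossRank (n : ℕ) :
    Module.finrank ℝ (crossRelSpace n) = (n + 1) * (n + 2) / 2 - n := by
  have e : crossRelSpace n ≃ₗ[ℝ] (QIdx n → ℝ) :=
    LinearEquiv.ofBijective (crossPhi n) ⟨crossPhi_inj n, crossPhi_surj n⟩
  rw [e.finrank_eq, Module.finrank_fintype_fun_eq_card]
  have hcard : Fintype.card (QIdx n) = (∑ i ∈ Finset.range n, (i+1)) + 1 := by
    simp [Fintype.card_sigma, Fin.sum_univ_eq_sum_range (fun k => k+1)]
  rw [hcard, sum_succ_aux]
  have h1 := evensum_aux n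
  have h2 := evensum_aux (n+1)
  have h3 : (n+1+1)*(n+1) = (n+1)*n + 2*(n+1) := by ring
  have h4 : (n+1)*(n+2) = (n+1+1)*(n+1) := by ring
  omega

/-- The cross-polytope `βₙ₊₁` has vertices `0`, `eᵢ` (`i ≠ last`), `e_last` and
`e_last - eᵢ` (`i ≠ last`), in coordinates w.r.t. the basis `e₁, …, e_{n+1}`; the Gram
matrix `G` records the inner products `⟨eᵢ, eⱼ⟩`.  The circumscribing conditions are
equivalent to the `n` relations `G i last = G i i`, and the resulting space of Gram
matrices has dimension `(n+1)(n+2)/2 - n`. -/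
theorem stmt_12 (n : ℕ) (hn : 1 ≤ n) :
    (∀ G : Matrix (Fin (n + 1)) (Fin (n + 1)) ℝ, G.IsSymm → G.PosDef →
      ((∃ c : Fin (n + 1) → ℝ,
          (∀ i : Fin (n + 1),
            2 * (c ⬝ᵥ G.mulVec (Pi.single i 1)) =
              (Pi.single i 1 : Fin (n + 1) → ℝ) ⬝ᵥ G.mulVec (Pi.single i 1)) ∧
          (∀ i : Fin (n + 1), i ≠ Fin.last n →
            2 * (c ⬝ᵥ G.mulVec (Pi.single (Fin.last n) 1 - Pi.single i 1)) =
              (Pi.single (Fin.last n) 1 - Pi.single i 1 : Fin (n + 1) → ℝ) ⬝ᵥ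
                G.mulVec (Pi.single (Fin.last n) 1 - Pi.single i 1))) ↔
        (∀ i : Fin (n + 1), i ≠ Fin.last n → G i (Fin.last n) = G i i))) ∧
    Module.finrank ℝ (crossRelSpace n) = (n + 1) * (n + 2) / 2 - n := by
  refine ⟨fun G hsymm hpd => ?_, crossRank n⟩
  constructor
  · rintro ⟨c, hA, hB⟩ i hi
    have hw : ∀ x : Fin (n+1) → ℝ, c ⬝ᵥ G *ᵥ x = (G *ᵥ c) ⬝ᵥ x := fun x => by
      rw [Matrix.dotProduct_mulVec, ← Matrix.mulVec_transpose, hsymm.eq]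
    have h1 := hA i
    have h2 := hA (Fin.last n)
    have h3 := hB i hi
    rw [hw] at h1 h2 h3
    simp [Matrix.mulVec_single, dotProduct_single, single_dotProduct,
      Matrix.mulVec_sub, dotProduct_sub, sub_dotProduct] at h1 h2 h3
    have hs : G (Fin.last n) i = G i (Fin.last n) := hsymm.apply i (Fin.last n)
    linarith
  · intro hrel
    have hdet : IsUnit G.det := isUnit_iff_ne_zero.mpr hpd.det_pos.ne'
    set c : Fin (n+1) → ℝ := G⁻¹ *ᵥ (fun k => G k k / 2) with hc
    have hw : ∀ x : Fin (n+1) → ℝ, c ⬝ᵥ G *ᵥ x = (G *ᵥ c) ⬝ᵥ x := fun x => by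
      rw [Matrix.dotProduct_mulVec, ← Matrix.mulVec_transpose, hsymm.eq]
    have hGc : G *ᵥ c = fun k => G k k / 2 := by
      rw [hc, Matrix.mulVec_mulVec, Matrix.mul_nonsing_inv _ hdet, Matrix.one_mulVec]
    refine ⟨c, fun i => ?_, fun i hi => ?_⟩
    · rw [hw, hGc]
      simp [Matrix.mulVec_single, dotProduct_single, single_dotProduct]
      ring
    · rw [hw, hGc]
      have hs : G (Fin.last n) i = G i (Fin.last n) := hsymm.apply i (Fin.last n)
      have hr := hrel i hi
      simp [Matrix.mulVec_single, dotProduct_single, single_dotProduct,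
        Matrix.mulVec_sub, dotProduct_sub, sub_dotProduct]
      linarith
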